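/- Define b: ℝ → ℝ by b(y) = y · log(e/y) for 0 < y < e and b(y) = 0 otherwise. Then: (i) for every x ∈ (0,e) and every s ∈ ℝ, the function γ(t) = e · (x/e)^{exp(s−t)} takes values in (0,e), satisfies γ(s) = x, and γ'(t) = b(γ(t)) for all t ∈ ℝ; (ii) for every k ∈ (0,1) and every q ≥ 1, the function x ↦ k (x/e)^{k−1} on (0,e), which is the derivative in x of x ↦ e(x/e)^k, satisfies ∫_0^e ( k (x/e)^{k−1} )^q dx < +∞ if and only if q < 1/(1−k). -/

import Mathlib

open MeasureTheory

theorem stmt_19 (b : ℝ → ℝ)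
    (hb : ∀ y : ℝ, b y = if y ∈ Set.Ioo (0:ℝ) (Real.exp 1) then
      y * Real.log (Real.exp 1 / y) else 0) :
    (∀ x ∈ Set.Ioo (0:ℝ) (Real.exp 1), ∀ s : ℝ,
      (∀ t : ℝ,
        Real.exp 1 * (x / Real.exp 1) ^ Real.exp (s - t) ∈ Set.Ioo (0:ℝ) (Real.exp 1)) ∧
      Real.exp 1 * (x / Real.exp 1) ^ Real.exp (s - s) = x ∧
      (∀ t : ℝ, HasDerivAt (fun τ : ℝ => Real.exp 1 * (x / Real.exp 1) ^ Real.exp (s - τ))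
        (b (Real.exp 1 * (x / Real.exp 1) ^ Real.exp (s - t))) t)) ∧
    (∀ k ∈ Set.Ioo (0:ℝ) 1, ∀ q : ℝ, 1 ≤ q →
      ((∀ x ∈ Set.Ioo (0:ℝ) (Real.exp 1),
        HasDerivAt (fun y : ℝ => Real.exp 1 * (y / Real.exp 1) ^ k)
          (k * (x / Real.exp 1) ^ (k - 1)) x) ∧
      ((∫⁻ x in Set.Ioo (0:ℝ) (Real.exp 1),
          ENNReal.ofReal ((k * (x / Real.exp 1) ^ (k - 1)) ^ q) ≠ ⊤) ↔
        q < 1 / (1 - k)))) := by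
  have he : (0:ℝ) < Real.exp 1 := Real.exp_pos 1
  constructor
  · rintro x ⟨hx0, hxe⟩ s
    have hc0 : (0:ℝ) < x / Real.exp 1 := div_pos hx0 he
    have hc1 : x / Real.exp 1 < 1 := (div_lt_one he).2 hxe
    have hmem : ∀ t : ℝ,
        Real.exp 1 * (x / Real.exp 1) ^ Real.exp (s - t) ∈ Set.Ioo (0:ℝ) (Real.exp 1) := by
      intro t
      constructor
      · exact mul_pos he (Real.rpow_pos_of_pos hc0 _)
      · have : (x / Real.exp 1) ^ Real.exp (s - t) < 1 :=
          Real.rpow_lt_one hc0.le hc1 (Real.exp_pos _)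
        calc Real.exp 1 * (x / Real.exp 1) ^ Real.exp (s - t)
            < Real.exp 1 * 1 := by nlinarith
          _ = Real.exp 1 := mul_one _
    refine ⟨hmem, ?_, ?_⟩
    · simp [Real.rpow_one, mul_div_cancel₀, he.ne']
    · intro t
      set c := x / Real.exp 1 with hc
      have hfun : (fun τ : ℝ => Real.exp 1 * c ^ Real.exp (s - τ)) =
          fun τ : ℝ => Real.exp 1 * Real.exp (Real.exp (s - τ) * Real.log c) := by
        funext τ
        rw [Real.rpow_def_of_pos hc0, mul_comm (Real.log c)]
      have h1 : HasDerivAt (fun τ : ℝ => s - τ) (-1) t := by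
        simpa using (hasDerivAt_id t).const_sub s
      have h2 : HasDerivAt (fun τ : ℝ => Real.exp (s - τ)) (Real.exp (s - t) * (-1)) t :=
        h1.exp
      have h3 : HasDerivAt (fun τ : ℝ => Real.exp (s - τ) * Real.log c)
          (Real.exp (s - t) * (-1) * Real.log c) t := h2.mul_const _
      have h4 : HasDerivAt (fun τ : ℝ => Real.exp 1 * Real.exp (Real.exp (s - τ) * Real.log c))
          (Real.exp 1 * (Real.exp (Real.exp (s - t) * Real.log c) *
            (Real.exp (s - t) * (-1) * Real.log c))) t := (h3.exp).const_mul _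
      rw [← hfun] at h4
      convert h4 using 1
      rw [hb _, if_pos (hmem t)]
      have hγpos : (0:ℝ) < Real.exp 1 * c ^ Real.exp (s - t) := (hmem t).1
      rw [Real.log_div he.ne' hγpos.ne', Real.log_mul he.ne'
        (Real.rpow_pos_of_pos hc0 _).ne', Real.log_rpow hc0, Real.log_exp,
        Real.rpow_def_of_pos hc0]
      ring
  · rintro k ⟨hk0, hk1⟩ q hq
    have h1k : (0:ℝ) < 1 - k := by linarith
    constructor
    · rintro x ⟨hx0, hxe⟩
      have hc0 : (0:ℝ) < x / Real.exp 1 := div_pos hx0 he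
      have hinner : HasDerivAt (fun y : ℝ => y / Real.exp 1) (1 / Real.exp 1) x := by
        simpa using (hasDerivAt_id x).div_const (Real.exp 1)
      have hpow : HasDerivAt (fun z : ℝ => z ^ k)
          (k * (x / Real.exp 1) ^ (k - 1)) (x / Real.exp 1) :=
        Real.hasDerivAt_rpow_const (Or.inl hc0.ne')
      have := ((hpow.comp x hinner).const_mul (Real.exp 1))
      refine this.congr_deriv ?_
      rw [mul_comm (Real.exp 1), mul_assoc, one_div, inv_mul_cancel₀ he.ne', mul_one]
    · -- integral part
      set α := (k - 1) * q with hα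
      set C := k ^ q / (Real.exp 1) ^ α with hC
      have hCpos : 0 < C := div_pos (Real.rpow_pos_of_pos hk0 _) (Real.rpow_pos_of_pos he _)
      have hkey : ∀ x ∈ Set.Ioo (0:ℝ) (Real.exp 1),
          (k * (x / Real.exp 1) ^ (k - 1)) ^ q = C * x ^ α := by
        rintro x ⟨hx0, hxe⟩
        have hc0 : (0:ℝ) < x / Real.exp 1 := div_pos hx0 he
        rw [Real.mul_rpow hk0.le (Real.rpow_pos_of_pos hc0 _).le,
          ← Real.rpow_mul hc0.le, Real.div_rpow hx0.le he.le, hC, hα]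
        ring
      have hcongr : ∫⁻ x in Set.Ioo (0:ℝ) (Real.exp 1),
          ENNReal.ofReal ((k * (x / Real.exp 1) ^ (k - 1)) ^ q) =
          ∫⁻ x in Set.Ioo (0:ℝ) (Real.exp 1), ENNReal.ofReal (C * x ^ α) := by
        refine setLIntegral_congr_fun measurableSet_Ioo ?_
        intro x hx
        simp only [hkey x hx]
      rw [hcongr]
      have hcont : ContinuousOn (fun x : ℝ => C * x ^ α) (Set.Ioo 0 (Real.exp 1)) := by
        intro x hx
        exact (continuousAt_const.mul
          (Real.continuousAt_rpow_const x α (Or.inl hx.1.ne'))).continuousWithinAt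
      have hmeas : AEStronglyMeasurable (fun x : ℝ => C * x ^ α)
          ((volume : Measure ℝ).restrict (Set.Ioo 0 (Real.exp 1))) :=
        hcont.aestronglyMeasurable measurableSet_Ioo
      have hnn : 0 ≤ᵐ[(volume : Measure ℝ).restrict (Set.Ioo 0 (Real.exp 1))]
          (fun x : ℝ => C * x ^ α) := by
        filter_upwards [ae_restrict_mem measurableSet_Ioo] with x hx
        exact mul_nonneg hCpos.le (Real.rpow_nonneg hx.1.le _)
      rw [lintegral_ofReal_ne_top_iff_integrable hmeas hnn]
      have hiff : Integrable (fun x : ℝ => C * x ^ α)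
          ((volume : Measure ℝ).restrict (Set.Ioo 0 (Real.exp 1))) ↔
          IntegrableOn (fun x : ℝ => x ^ α) (Set.Ioo 0 (Real.exp 1)) :=
        integrable_const_mul_iff (IsUnit.mk0 C hCpos.ne') _
      rw [hiff, intervalIntegral.integrableOn_Ioo_rpow_iff he, hα, lt_div_iff₀ h1k]
      constructor <;> intro h <;> nlinarith
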